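/- Let l_n denote the number of independent dominating sets of the para-chain hexagonal cactus L_n, and set l_0 = 1 (the one-vertex graph L_0 has exactly one maximal independent set). Then l_1 = 5, l_2 = 19, l_3 = 76, and for every n ≥ 3, l_n = 5l_{n-1} − 4l_{n-2} + l_{n-3}. -/
import Mathlib


/-- `S` is an independent dominating set of `G`: pairwise non-adjacent, and every
vertex outside `S` has a neighbour in `S`. -/
def IsIndepDomSet {V : Type*} (G : SimpleGraph V) (S : Finset V) : Prop :=
  (∀ v ∈ S, ∀ w ∈ S, ¬ G.Adj v w) ∧ ∀ v, v ∉ S → ∃ w ∈ S, G.Adj v w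

/-- The para-chain hexagonal cactus `L n`: `Sum.inl i` is the cut vertex `x i`
(`0 ≤ i ≤ n`) and `Sum.inr (k, t)` for `t = 0, 1, 2, 3` is `a (k+1)`, `b (k+1)`,
`c (k+1)`, `d (k+1)` respectively (`0 ≤ k ≤ n-1`); the `i`-th hexagon
(`1 ≤ i ≤ n`) is the six-cycle `x (i-1) – a i – b i – x i – c i – d i – x (i-1)`. -/
def paraHex (n : ℕ) : SimpleGraph (Fin (n + 1) ⊕ Fin n × Fin 4) :=
  SimpleGraph.fromRel fun p q =>
    match p, q with
    | Sum.inl i, Sum.inr (k, t) =>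
        ((i : ℕ) = (k : ℕ) ∧ (t = 0 ∨ t = 3)) ∨
          ((i : ℕ) = (k : ℕ) + 1 ∧ (t = 1 ∨ t = 2))
    | Sum.inr (k, t), Sum.inr (k', t') =>
        k = k' ∧ ((t = 0 ∧ t' = 1) ∨ (t = 2 ∧ t' = 3))
    | _, _ => False

/-- The number of independent dominating sets of the para-chain hexagonal cactus `L n`. -/
noncomputable def numIDSParaHex (n : ℕ) : ℕ :=
  Nat.card {S : Finset (Fin (n + 1) ⊕ Fin n × Fin 4) // IsIndepDomSet (paraHex n) S}

namespace IDSProof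

def hexOK (u v : Bool) (T : Fin 4 → Bool) : Bool :=
  (!(u && T 0)) && (!(T 0 && T 1)) && (!(T 1 && v)) && (!(v && T 2)) &&
  (!(T 2 && T 3)) && (!(T 3 && u)) &&
  (T 0 || u || T 1) && (T 1 || T 0 || v) && (T 2 || v || T 3) && (T 3 || T 2 || u)

lemma hexOK_iff (u v : Bool) (T : Fin 4 → Bool) : hexOK u v T = true ↔
    ((¬(u = true ∧ T 0 = true)) ∧ (¬(T 0 = true ∧ T 1 = true)) ∧ (¬(T 1 = true ∧ v = true)) ∧
     (¬(v = true ∧ T 2 = true)) ∧ (¬(T 2 = true ∧ T 3 = true)) ∧ (¬(T 3 = true ∧ u = true))) ∧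
    ((T 0 = true ∨ u = true ∨ T 1 = true) ∧ (T 1 = true ∨ T 0 = true ∨ v = true) ∧
     (T 2 = true ∨ v = true ∨ T 3 = true) ∧ (T 3 = true ∨ T 2 = true ∨ u = true)) := by
  simp only [hexOK]
  generalize T 0 = a
  generalize T 1 = b
  generalize T 2 = c
  generalize T 3 = d
  cases u <;> cases v <;> cases a <;> cases b <;> cases c <;> cases d <;> simp

def Raw (n : ℕ) (p : (Fin (n+1) → Bool) × (Fin n → Fin 4 → Bool)) : Prop :=
  (∀ k : Fin n, hexOK (p.1 k.castSucc) (p.1 k.succ) (p.2 k) = true) ∧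
  (∀ i : Fin (n+1), p.1 i = true ∨ ∃ k : Fin n,
    ((i:ℕ) = (k:ℕ) ∧ (p.2 k 0 = true ∨ p.2 k 3 = true)) ∨
    ((i:ℕ) = (k:ℕ) + 1 ∧ (p.2 k 1 = true ∨ p.2 k 2 = true)))

lemma adj_inl_inl {n : ℕ} (i j : Fin (n+1)) : ¬ (paraHex n).Adj (.inl i) (.inl j) := by
  simp [paraHex, SimpleGraph.fromRel_adj]

lemma adj_inl_inr {n : ℕ} (i : Fin (n+1)) (k : Fin n) (t : Fin 4) :
    (paraHex n).Adj (.inl i) (.inr (k, t)) ↔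
      ((i:ℕ) = (k:ℕ) ∧ (t = 0 ∨ t = 3)) ∨ ((i:ℕ) = (k:ℕ)+1 ∧ (t = 1 ∨ t = 2)) := by
  simp [paraHex, SimpleGraph.fromRel_adj]

lemma adj_inr_inr {n : ℕ} (k k' : Fin n) (t t' : Fin 4) :
    (paraHex n).Adj (.inr (k,t)) (.inr (k',t')) ↔
      k = k' ∧ ((t = 0 ∧ t' = 1) ∨ (t = 2 ∧ t' = 3) ∨ (t = 1 ∧ t' = 0) ∨ (t = 3 ∧ t' = 2)) := by
  simp only [paraHex, SimpleGraph.fromRel_adj]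
  constructor
  · rintro ⟨hne, h | h⟩
    · exact ⟨h.1, by tauto⟩
    · exact ⟨h.1.symm, by tauto⟩
  · rintro ⟨rfl, h⟩
    refine ⟨?_, ?_⟩
    · simp only [ne_eq, Sum.inr.injEq, Prod.mk.injEq, true_and]
      rintro rfl
      rcases h with ⟨h1,h2⟩|⟨h1,h2⟩|⟨h1,h2⟩|⟨h1,h2⟩ <;> subst h1 <;> exact absurd h2 (by decide)
    · tauto

lemma adj_inr_inl {n : ℕ} (i : Fin (n+1)) (k : Fin n) (t : Fin 4) :
    (paraHex n).Adj (.inr (k, t)) (.inl i) ↔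
      ((i:ℕ) = (k:ℕ) ∧ (t = 0 ∨ t = 3)) ∨ ((i:ℕ) = (k:ℕ)+1 ∧ (t = 1 ∨ t = 2)) := by
  rw [(paraHex n).adj_comm]; exact adj_inl_inr i k t

def toPair (n : ℕ) (S : Finset (Fin (n + 1) ⊕ Fin n × Fin 4)) :
    (Fin (n+1) → Bool) × (Fin n → Fin 4 → Bool) :=
  (fun i => decide (Sum.inl i ∈ S), fun k t => decide (Sum.inr (k, t) ∈ S))

lemma ids_iff_raw (n : ℕ) (S : Finset (Fin (n + 1) ⊕ Fin n × Fin 4)) :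
    IsIndepDomSet (paraHex n) S ↔ Raw n (toPair n S) := by
  have hc : ∀ k : Fin n, ((k.castSucc : Fin (n+1)) : ℕ) = (k : ℕ) := fun k => rfl
  have hs : ∀ k : Fin n, ((k.succ : Fin (n+1)) : ℕ) = (k : ℕ) + 1 := fun k => rfl
  constructor
  · rintro ⟨hind, hdom⟩
    constructor
    · intro k
      rw [hexOK_iff]
      simp only [toPair, decide_eq_true_eq]
      constructor
      · refine ⟨?_, ?_, ?_, ?_, ?_, ?_⟩ <;> rintro ⟨h1, h2⟩
        · exact hind _ h1 _ h2 ((adj_inl_inr _ k 0).2 (Or.inl ⟨hc k, Or.inl rfl⟩))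
        · exact hind _ h1 _ h2 ((adj_inr_inr k k 0 1).2 ⟨rfl, by tauto⟩)
        · exact hind _ h2 _ h1 ((adj_inl_inr _ k 1).2 (Or.inr ⟨hs k, Or.inl rfl⟩))
        · exact hind _ h1 _ h2 ((adj_inl_inr _ k 2).2 (Or.inr ⟨hs k, Or.inr rfl⟩))
        · exact hind _ h1 _ h2 ((adj_inr_inr k k 2 3).2 ⟨rfl, by tauto⟩)
        · exact hind _ h2 _ h1 ((adj_inl_inr _ k 3).2 (Or.inl ⟨hc k, Or.inr rfl⟩))
      · refine ⟨?_, ?_, ?_, ?_⟩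
        · by_cases h : Sum.inr (k, (0:Fin 4)) ∈ S
          · exact Or.inl h
          · obtain ⟨w, hw, hadj⟩ := hdom _ h
            right
            rcases w with i | ⟨k', t'⟩
            · rw [adj_inr_inl] at hadj
              rcases hadj with ⟨h1, _⟩ | ⟨_, h2 | h2⟩
              · left
                have : i = k.castSucc := Fin.ext h1
                exact this ▸ hw
              · exact absurd h2 (by decide)
              · exact absurd h2 (by decide)
            · rw [adj_inr_inr] at hadj
              obtain ⟨rfl, hadj⟩ := hadj
              rcases hadj with ⟨_, rfl⟩ | ⟨h2, _⟩ | ⟨h2, _⟩ | ⟨h2, _⟩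
              · exact Or.inr hw
              all_goals exact absurd h2 (by decide)
        · by_cases h : Sum.inr (k, (1:Fin 4)) ∈ S
          · exact Or.inl h
          · obtain ⟨w, hw, hadj⟩ := hdom _ h
            right
            rcases w with i | ⟨k', t'⟩
            · rw [adj_inr_inl] at hadj
              rcases hadj with ⟨_, h2 | h2⟩ | ⟨h1, _⟩
              · exact absurd h2 (by decide)
              · exact absurd h2 (by decide)
              · right
                have : i = k.succ := Fin.ext h1
                exact this ▸ hw
            · rw [adj_inr_inr] at hadj
              obtain ⟨rfl, hadj⟩ := hadj
              rcases hadj with ⟨h2, _⟩ | ⟨h2, _⟩ | ⟨_, rfl⟩ | ⟨h2, _⟩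
              · exact absurd h2 (by decide)
              · exact absurd h2 (by decide)
              · exact Or.inl hw
              · exact absurd h2 (by decide)
        · by_cases h : Sum.inr (k, (2:Fin 4)) ∈ S
          · exact Or.inl h
          · obtain ⟨w, hw, hadj⟩ := hdom _ h
            right
            rcases w with i | ⟨k', t'⟩
            · rw [adj_inr_inl] at hadj
              rcases hadj with ⟨_, h2 | h2⟩ | ⟨h1, _⟩
              · exact absurd h2 (by decide)
              · exact absurd h2 (by decide)
              · left
                have : i = k.succ := Fin.ext h1
                exact this ▸ hw
            · rw [adj_inr_inr] at hadj
              obtain ⟨rfl, hadj⟩ := hadj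
              rcases hadj with ⟨h2, _⟩ | ⟨_, rfl⟩ | ⟨h2, _⟩ | ⟨h2, _⟩
              · exact absurd h2 (by decide)
              · exact Or.inr hw
              · exact absurd h2 (by decide)
              · exact absurd h2 (by decide)
        · by_cases h : Sum.inr (k, (3:Fin 4)) ∈ S
          · exact Or.inl h
          · obtain ⟨w, hw, hadj⟩ := hdom _ h
            right
            rcases w with i | ⟨k', t'⟩
            · rw [adj_inr_inl] at hadj
              rcases hadj with ⟨h1, _⟩ | ⟨_, h2 | h2⟩
              · right
                have : i = k.castSucc := Fin.ext h1
                exact this ▸ hw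
              · exact absurd h2 (by decide)
              · exact absurd h2 (by decide)
            · rw [adj_inr_inr] at hadj
              obtain ⟨rfl, hadj⟩ := hadj
              rcases hadj with ⟨h2, _⟩ | ⟨h2, _⟩ | ⟨h2, _⟩ | ⟨_, rfl⟩
              · exact absurd h2 (by decide)
              · exact absurd h2 (by decide)
              · exact absurd h2 (by decide)
              · exact Or.inl hw
    · intro i
      by_cases h : Sum.inl i ∈ S
      · exact Or.inl (by simp [toPair, h])
      · right
        obtain ⟨w, hw, hadj⟩ := hdom _ h
        rcases w with j | ⟨k, t⟩
        · exact absurd hadj (adj_inl_inl i j)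
        · refine ⟨k, ?_⟩
          rw [adj_inl_inr] at hadj
          simp only [toPair, decide_eq_true_eq]
          rcases hadj with ⟨h1, rfl | rfl⟩ | ⟨h1, rfl | rfl⟩
          · exact Or.inl ⟨h1, Or.inl hw⟩
          · exact Or.inl ⟨h1, Or.inr hw⟩
          · exact Or.inr ⟨h1, Or.inl hw⟩
          · exact Or.inr ⟨h1, Or.inr hw⟩
  · rintro ⟨hhex, hdom⟩
    have H : ∀ k : Fin n,
        ((¬(Sum.inl k.castSucc ∈ S ∧ Sum.inr (k, (0:Fin 4)) ∈ S)) ∧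
         (¬(Sum.inr (k, (0:Fin 4)) ∈ S ∧ Sum.inr (k, (1:Fin 4)) ∈ S)) ∧
         (¬(Sum.inr (k, (1:Fin 4)) ∈ S ∧ Sum.inl k.succ ∈ S)) ∧
         (¬(Sum.inl k.succ ∈ S ∧ Sum.inr (k, (2:Fin 4)) ∈ S)) ∧
         (¬(Sum.inr (k, (2:Fin 4)) ∈ S ∧ Sum.inr (k, (3:Fin 4)) ∈ S)) ∧
         (¬(Sum.inr (k, (3:Fin 4)) ∈ S ∧ Sum.inl k.castSucc ∈ S))) ∧
        ((Sum.inr (k, (0:Fin 4)) ∈ S ∨ Sum.inl k.castSucc ∈ S ∨ Sum.inr (k, (1:Fin 4)) ∈ S) ∧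
         (Sum.inr (k, (1:Fin 4)) ∈ S ∨ Sum.inr (k, (0:Fin 4)) ∈ S ∨ Sum.inl k.succ ∈ S) ∧
         (Sum.inr (k, (2:Fin 4)) ∈ S ∨ Sum.inl k.succ ∈ S ∨ Sum.inr (k, (3:Fin 4)) ∈ S) ∧
         (Sum.inr (k, (3:Fin 4)) ∈ S ∨ Sum.inr (k, (2:Fin 4)) ∈ S ∨ Sum.inl k.castSucc ∈ S)) := by
      intro k
      have := (hexOK_iff _ _ _).1 (hhex k)
      simpa only [toPair, decide_eq_true_eq] using this
    constructor
    · intro v hv w hw hadj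
      rcases v with i | ⟨k, t⟩
      · rcases w with j | ⟨k, t⟩
        · exact adj_inl_inl i j hadj
        · rw [adj_inl_inr] at hadj
          rcases hadj with ⟨h1, rfl | rfl⟩ | ⟨h1, rfl | rfl⟩
          · have e : i = k.castSucc := Fin.ext h1
            exact (H k).1.1 ⟨e ▸ hv, hw⟩
          · have e : i = k.castSucc := Fin.ext h1
            exact (H k).1.2.2.2.2.2 ⟨hw, e ▸ hv⟩
          · have e : i = k.succ := Fin.ext h1
            exact (H k).1.2.2.1 ⟨hw, e ▸ hv⟩
          · have e : i = k.succ := Fin.ext h1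
            exact (H k).1.2.2.2.1 ⟨e ▸ hv, hw⟩
      · rcases w with j | ⟨k', t'⟩
        · rw [adj_inr_inl] at hadj
          rcases hadj with ⟨h1, rfl | rfl⟩ | ⟨h1, rfl | rfl⟩
          · have e : j = k.castSucc := Fin.ext h1
            exact (H k).1.1 ⟨e ▸ hw, hv⟩
          · have e : j = k.castSucc := Fin.ext h1
            exact (H k).1.2.2.2.2.2 ⟨hv, e ▸ hw⟩
          · have e : j = k.succ := Fin.ext h1
            exact (H k).1.2.2.1 ⟨hv, e ▸ hw⟩
          · have e : j = k.succ := Fin.ext h1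
            exact (H k).1.2.2.2.1 ⟨e ▸ hw, hv⟩
        · rw [adj_inr_inr] at hadj
          obtain ⟨rfl, hadj⟩ := hadj
          rcases hadj with ⟨rfl, rfl⟩ | ⟨rfl, rfl⟩ | ⟨rfl, rfl⟩ | ⟨rfl, rfl⟩
          · exact (H k).1.2.1 ⟨hv, hw⟩
          · exact (H k).1.2.2.2.2.1 ⟨hv, hw⟩
          · exact (H k).1.2.1 ⟨hw, hv⟩
          · exact (H k).1.2.2.2.2.1 ⟨hw, hv⟩
    · intro v hv
      rcases v with i | ⟨k, t⟩
      · rcases hdom i with h | ⟨k, ⟨h1, hf | hf⟩ | ⟨h1, hf | hf⟩⟩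
        · exact absurd (by simpa [toPair] using h) hv
        · exact ⟨Sum.inr (k, 0), by simpa [toPair] using hf,
            (adj_inl_inr i k 0).2 (Or.inl ⟨h1, Or.inl rfl⟩)⟩
        · exact ⟨Sum.inr (k, 3), by simpa [toPair] using hf,
            (adj_inl_inr i k 3).2 (Or.inl ⟨h1, Or.inr rfl⟩)⟩
        · exact ⟨Sum.inr (k, 1), by simpa [toPair] using hf,
            (adj_inl_inr i k 1).2 (Or.inr ⟨h1, Or.inl rfl⟩)⟩
        · exact ⟨Sum.inr (k, 2), by simpa [toPair] using hf,
            (adj_inl_inr i k 2).2 (Or.inr ⟨h1, Or.inr rfl⟩)⟩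
      · fin_cases t
        · rcases (H k).2.1 with h | h | h
          · exact absurd h hv
          · exact ⟨Sum.inl k.castSucc, h, (adj_inr_inl _ k 0).2 (Or.inl ⟨rfl, Or.inl rfl⟩)⟩
          · exact ⟨Sum.inr (k, 1), h, (adj_inr_inr k k 0 1).2 ⟨rfl, Or.inl ⟨rfl, rfl⟩⟩⟩
        · rcases (H k).2.2.1 with h | h | h
          · exact absurd h hv
          · exact ⟨Sum.inr (k, 0), h, (adj_inr_inr k k 1 0).2 ⟨rfl, by tauto⟩⟩
          · exact ⟨Sum.inl k.succ, h, (adj_inr_inl _ k 1).2 (Or.inr ⟨rfl, Or.inl rfl⟩)⟩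
        · rcases (H k).2.2.2.1 with h | h | h
          · exact absurd h hv
          · exact ⟨Sum.inl k.succ, h, (adj_inr_inl _ k 2).2 (Or.inr ⟨rfl, Or.inr rfl⟩)⟩
          · exact ⟨Sum.inr (k, 3), h, (adj_inr_inr k k 2 3).2 ⟨rfl, by tauto⟩⟩
        · rcases (H k).2.2.2.2 with h | h | h
          · exact absurd h hv
          · exact ⟨Sum.inr (k, 2), h, (adj_inr_inr k k 3 2).2 ⟨rfl, by tauto⟩⟩
          · exact ⟨Sum.inl k.castSucc, h, (adj_inr_inl _ k 3).2 (Or.inl ⟨rfl, Or.inr rfl⟩)⟩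



def rstate (v : Bool) (T : Fin 4 → Bool) : Fin 3 :=
  if v then 0 else if T 1 || T 2 then 1 else 2

def transOK (a : Fin 3) (T : Fin 4 → Bool) (b : Fin 3) : Bool :=
  hexOK (decide (a = 0)) (decide (b = 0)) T &&
  ((!(decide (a = 2))) || T 0 || T 3) &&
  decide (rstate (decide (b = 0)) T = b)

def stAt {n : ℕ} (u : Fin (n+1) → Bool) (f : Fin n → Fin 4 → Bool) (i : Fin (n+1)) : Fin 3 :=
  if u i then 0
  else if h : 0 < (i : ℕ) then
    (if f ⟨(i:ℕ) - 1, by have := i.isLt; omega⟩ 1 || f ⟨(i:ℕ) - 1, by have := i.isLt; omega⟩ 2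
      then 1 else 2)
  else 2

def Q' (n : ℕ) (σ : Fin 3) (p : (Fin (n+1) → Bool) × (Fin n → Fin 4 → Bool)) : Prop :=
  (∀ k : Fin n, transOK (stAt p.1 p.2 k.castSucc) (p.2 k) (stAt p.1 p.2 k.succ) = true) ∧
  stAt p.1 p.2 (Fin.last n) = σ

def QIDS (n : ℕ) (p : (Fin (n+1) → Bool) × (Fin n → Fin 4 → Bool)) : Prop :=
  (∀ k : Fin n, transOK (stAt p.1 p.2 k.castSucc) (p.2 k) (stAt p.1 p.2 k.succ) = true) ∧
  stAt p.1 p.2 (Fin.last n) ≠ 2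

lemma stAt_eq_zero {n : ℕ} (u : Fin (n+1) → Bool) (f : Fin n → Fin 4 → Bool) (i : Fin (n+1)) :
    stAt u f i = 0 ↔ u i = true := by
  unfold stAt
  split_ifs <;> simp_all

lemma stAt_decide {n : ℕ} (u : Fin (n+1) → Bool) (f : Fin n → Fin 4 → Bool) (i : Fin (n+1)) :
    decide (stAt u f i = 0) = u i := by
  cases hui : u i
  · simp [stAt_eq_zero, hui]
  · simp [stAt_eq_zero, hui]

lemma rstate_decide (v : Bool) (T : Fin 4 → Bool) : decide (rstate v T = 0) = v := by
  cases v <;> unfold rstate <;> simp <;> split <;> decide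

lemma stAt_succ {n : ℕ} (u : Fin (n+1) → Bool) (f : Fin n → Fin 4 → Bool) (k : Fin n) :
    stAt u f k.succ = rstate (u k.succ) (f k) := by
  unfold stAt rstate
  by_cases h : u k.succ = true
  · simp [h]
  · have hpos : 0 < (k.succ : Fin (n+1)).1 := by simp [Fin.val_succ]
    have e : (⟨((k.succ : Fin (n+1)) : ℕ) - 1, by have := k.isLt; simp [Fin.val_succ]⟩ : Fin n) = k := by
      apply Fin.ext; simp [Fin.val_succ]
    simp only [h, if_false, dif_pos hpos, e]

lemma transOK_at {n : ℕ} (u : Fin (n+1) → Bool) (f : Fin n → Fin 4 → Bool) (k : Fin n) :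
    transOK (stAt u f k.castSucc) (f k) (stAt u f k.succ) = true ↔
      (hexOK (u k.castSucc) (u k.succ) (f k) = true ∧
        (stAt u f k.castSucc = 2 → (f k 0 = true ∨ f k 3 = true))) := by
  unfold transOK
  rw [stAt_succ, rstate_decide, stAt_decide]
  simp only [Bool.and_eq_true, decide_eq_true_eq, Bool.or_eq_true, Bool.not_eq_true',
    decide_eq_false_iff_not]
  tauto

lemma raw_iff_qids (n : ℕ) (p : (Fin (n+1) → Bool) × (Fin n → Fin 4 → Bool)) :
    Raw n p ↔ QIDS n p := by
  obtain ⟨u, f⟩ := p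
  unfold Raw QIDS
  simp only [transOK_at]
  constructor
  · rintro ⟨hhex, hdom⟩
    refine ⟨fun k => ⟨hhex k, fun h2 => ?_⟩, ?_⟩
    · rcases hdom k.castSucc with hu | ⟨k', ⟨h1, hf⟩ | ⟨h1, hf⟩⟩
      · rw [(stAt_eq_zero u f _).2 hu] at h2
        exact absurd h2 (by decide)
      · have e : k' = k := Fin.ext (by simpa using h1.symm)
        exact e ▸ hf
      · exfalso
        unfold stAt at h2
        split_ifs at h2 with hu' hpos hb
        · exact absurd h2 (by decide)
        · exact absurd h2 (by decide)
        · have e : (⟨((k.castSucc : Fin (n+1)) : ℕ) - 1, by have := k.isLt; simp; omega⟩ : Fin n) = k' := by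
            apply Fin.ext
            simp only [Fin.coe_castSucc] at h1 ⊢
            omega
          rw [e] at hb
          rcases hf with hf | hf <;> simp [hf] at hb
        · simp only [Fin.coe_castSucc] at h1 hpos
          omega
    · rcases hdom (Fin.last n) with hu | ⟨k', ⟨h1, hf⟩ | ⟨h1, hf⟩⟩
      · rw [(stAt_eq_zero u f _).2 hu]; decide
      · exact absurd h1 (by have := k'.isLt; simp [Fin.val_last]; omega)
      · unfold stAt
        split_ifs with hu' hpos hb
        · decide
        · decide
        · exfalso
          simp only [Fin.val_last] at h1 hb
          have e : (⟨n - 1, by omega⟩ : Fin n) = k' := by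
            apply Fin.ext
            simp only []
            omega
          rw [e] at hb
          rcases hf with hf | hf <;> simp [hf] at hb
        · simp only [Fin.val_last] at hpos
          omega
  · rintro ⟨htrans, hlast⟩
    refine ⟨fun k => (htrans k).1, fun i => ?_⟩
    cases hu : u i
    · right
      have h3 : stAt u f i ≠ 0 := by simp [Ne, stAt_eq_zero, hu]
      have h4 : stAt u f i = 1 ∨ stAt u f i = 2 := by
        have : ∀ x : Fin 3, x ≠ 0 → x = 1 ∨ x = 2 := by decide
        exact this _ h3
      rcases h4 with h4 | h4
      · unfold stAt at h4
        split_ifs at h4 with hu' hpos hb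
        · exact absurd h4 (by decide)
        · refine ⟨⟨(i:ℕ) - 1, by have := i.isLt; omega⟩, Or.inr ⟨by simp only [Fin.val_mk]; omega, ?_⟩⟩
          rcases Bool.or_eq_true_iff.1 hb with h | h
          · exact Or.inl h
          · exact Or.inr h
        · exact absurd h4 (by decide)
        · exact absurd h4 (by decide)
      · have hin : (i:ℕ) < n := by
          by_contra hc
          have : i = Fin.last n := Fin.ext (by have := i.isLt; simp [Fin.val_last]; omega)
          exact hlast (this ▸ h4)
        have e : i = (⟨(i:ℕ), hin⟩ : Fin n).castSucc := Fin.ext rfl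
        have := (htrans ⟨(i:ℕ), hin⟩).2 (by rw [← e]; exact h4)
        exact ⟨⟨(i:ℕ), hin⟩, Or.inl ⟨rfl, this⟩⟩
    · exact Or.inl rfl


def toSet (n : ℕ) (p : (Fin (n+1) → Bool) × (Fin n → Fin 4 → Bool)) :
    Finset (Fin (n + 1) ⊕ Fin n × Fin 4) :=
  Finset.univ.filter (fun v => Sum.elim (fun i => p.1 i) (fun kt => p.2 kt.1 kt.2) v = true)

def pairEquiv (n : ℕ) :
    Finset (Fin (n + 1) ⊕ Fin n × Fin 4) ≃ (Fin (n+1) → Bool) × (Fin n → Fin 4 → Bool) where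
  toFun := toPair n
  invFun := toSet n
  left_inv := by
    intro S
    ext v
    rcases v with i | ⟨k, t⟩ <;> simp [toSet, toPair]
  right_inv := by
    intro p
    refine Prod.ext ?_ ?_ <;> funext x <;> try funext y
    · simp [toSet, toPair]
    · simp [toSet, toPair]

instance Q'dec (n : ℕ) (σ : Fin 3) : DecidablePred (Q' n σ) := by
  intro p; unfold Q'; infer_instance

instance QIDSdec (n : ℕ) : DecidablePred (QIDS n) := by
  intro p; unfold QIDS; infer_instance

lemma numIDS_eq_card_QIDS (n : ℕ) :
    numIDSParaHex n = Fintype.card {p // QIDS n p} := by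
  rw [numIDSParaHex, ← Nat.card_eq_fintype_card]
  exact Nat.card_congr (Equiv.subtypeEquiv (pairEquiv n)
    (fun S => (ids_iff_raw n S).trans (raw_iff_qids n _)))

lemma qids_iff (n : ℕ) (p : (Fin (n+1) → Bool) × (Fin n → Fin 4 → Bool)) :
    QIDS n p ↔ Q' n 0 p ∨ Q' n 1 p := by
  unfold QIDS Q'
  constructor
  · rintro ⟨h1, h2⟩
    have : stAt p.1 p.2 (Fin.last n) = 0 ∨ stAt p.1 p.2 (Fin.last n) = 1 := by
      have : ∀ x : Fin 3, x ≠ 2 → x = 0 ∨ x = 1 := by decide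
      exact this _ h2
    tauto
  · rintro (⟨h1, h2⟩ | ⟨h1, h2⟩) <;> exact ⟨h1, by rw [h2]; decide⟩

lemma card_QIDS (n : ℕ) :
    Fintype.card {p // QIDS n p} =
      Fintype.card {p // Q' n 0 p} + Fintype.card {p // Q' n 1 p} := by
  rw [← Fintype.card_sum]
  apply Fintype.card_congr
  exact (Equiv.subtypeEquivRight (qids_iff n)).trans
    (subtypeOrEquiv _ _ (by
      rw [Pi.disjoint_iff]
      intro p
      rw [Prop.disjoint_iff]
      rintro ⟨⟨_, h0⟩, ⟨_, h1⟩⟩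
      exact absurd (h0.symm.trans h1) (by decide)))

lemma stAt_init {n : ℕ} (u : Fin (n+2) → Bool) (f : Fin (n+1) → Fin 4 → Bool) (i : Fin (n+1)) :
    stAt (Fin.init u) (Fin.init f) i = stAt u f i.castSucc := rfl

lemma stAt_snoc {n : ℕ} (u : Fin (n+1) → Bool) (b : Bool) (f : Fin n → Fin 4 → Bool)
    (T : Fin 4 → Bool) (i : Fin (n+1)) :
    stAt (Fin.snoc u b) (Fin.snoc f T) i.castSucc = stAt u f i := by
  rw [← stAt_init (Fin.snoc u b) (Fin.snoc f T) i, Fin.init_snoc, Fin.init_snoc]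

lemma rstate_eq_zero {v : Bool} {T : Fin 4 → Bool} {σ : Fin 3} (h : rstate v T = σ) :
    v = decide (σ = 0) := by
  cases v
  · unfold rstate at h
    rw [if_neg (by simp)] at h
    have : σ ≠ 0 := by
      rw [← h]
      split <;> decide
    simp [this]
  · unfold rstate at h
    rw [if_pos rfl] at h
    simp [← h]

lemma transOK_rstate {a : Fin 3} {T : Fin 4 → Bool} {b : Fin 3} (h : transOK a T b = true) :
    rstate (decide (b = 0)) T = b := by
  unfold transOK at h
  simp only [Bool.and_eq_true, decide_eq_true_eq] at h
  exact h.2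

lemma stAt_last_succ {n : ℕ} (u : Fin (n+2) → Bool) (f : Fin (n+1) → Fin 4 → Bool) :
    stAt u f (Fin.last (n+1)) = rstate (u (Fin.last (n+1))) (f (Fin.last n)) := by
  rw [← Fin.succ_last, stAt_succ, Fin.succ_last]

lemma Q'_succ {n : ℕ} {σ : Fin 3} (u : Fin (n+2) → Bool) (f : Fin (n+1) → Fin 4 → Bool) :
    Q' (n+1) σ (u, f) ↔
      Q' n (stAt u f (Fin.last n).castSucc) (Fin.init u, Fin.init f) ∧
      transOK (stAt u f (Fin.last n).castSucc) (f (Fin.last n)) σ = true ∧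
      u (Fin.last (n+1)) = decide (σ = 0) := by
  unfold Q'
  constructor
  · rintro ⟨htrans, hlast⟩
    refine ⟨⟨fun k => ?_, ?_⟩, ?_, ?_⟩
    · have h := htrans k.castSucc
      rw [Fin.succ_castSucc] at h
      rw [stAt_init, stAt_init]
      exact h
    · rw [stAt_init]
    · have h := htrans (Fin.last n)
      rw [Fin.succ_last, hlast] at h
      exact h
    · rw [stAt_last_succ] at hlast
      exact rstate_eq_zero hlast
  · rintro ⟨⟨htrans, hσ'⟩, hT, hu⟩
    have hlast : stAt u f (Fin.last (n+1)) = σ := by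
      rw [stAt_last_succ, hu]
      exact transOK_rstate hT
    refine ⟨fun k => ?_, hlast⟩
    induction k using Fin.lastCases with
    | last =>
      rw [Fin.succ_last, hlast]
      exact hT
    | cast k =>
      have h := htrans k
      rw [stAt_init, stAt_init] at h
      rw [Fin.succ_castSucc]
      exact h

def fiberEquiv (n : ℕ) (σ σ' : Fin 3) :
    {q : {p : (Fin (n+2) → Bool) × (Fin (n+1) → Fin 4 → Bool) // Q' (n+1) σ p} //
        stAt q.1.1 q.1.2 (Fin.last n).castSucc = σ'} ≃
    ({T : Fin 4 → Bool // transOK σ' T σ = true} ×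
      {p : (Fin (n+1) → Bool) × (Fin n → Fin 4 → Bool) // Q' n σ' p}) where
  toFun q :=
    ⟨⟨q.1.1.2 (Fin.last n), by
        have h := (Q'_succ q.1.1.1 q.1.1.2).1 q.1.2
        rw [q.2] at h
        exact h.2.1⟩,
     ⟨(Fin.init q.1.1.1, Fin.init q.1.1.2), by
        have h := (Q'_succ q.1.1.1 q.1.1.2).1 q.1.2
        rw [q.2] at h
        exact h.1⟩⟩
  invFun x :=
    ⟨⟨(Fin.snoc x.2.1.1 (decide (σ = 0)), Fin.snoc x.2.1.2 x.1.1), by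
        rw [Q'_succ]
        have e : stAt (Fin.snoc x.2.1.1 (decide (σ = 0))) (Fin.snoc x.2.1.2 x.1.1)
            (Fin.last n).castSucc = σ' := by
          rw [stAt_snoc]
          exact x.2.2.2
        rw [e, Fin.init_snoc, Fin.init_snoc, Fin.snoc_last, Fin.snoc_last]
        exact ⟨x.2.2, x.1.2, rfl⟩⟩,
     by
        have e : stAt (Fin.snoc x.2.1.1 (decide (σ = 0))) (Fin.snoc x.2.1.2 x.1.1)
            (Fin.last n).castSucc = σ' := by
          rw [stAt_snoc]
          exact x.2.2.2
        exact e⟩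
  left_inv := by
    rintro ⟨⟨⟨u, f⟩, hq⟩, hfib⟩
    have h := (Q'_succ u f).1 hq
    apply Subtype.ext
    apply Subtype.ext
    refine Prod.ext ?_ ?_
    · show Fin.snoc (Fin.init u) (decide (σ = 0)) = u
      rw [← h.2.2]
      exact Fin.snoc_init_self u
    · exact Fin.snoc_init_self f
  right_inv := by
    rintro ⟨⟨T, hT⟩, ⟨⟨u, f⟩, hq⟩⟩
    refine Prod.ext ?_ ?_
    · apply Subtype.ext
      show (Fin.snoc f T : Fin (n+1) → Fin 4 → Bool) (Fin.last n) = T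
      exact Fin.snoc_last _ _
    · apply Subtype.ext
      refine Prod.ext ?_ ?_
      · show Fin.init (Fin.snoc u (decide (σ = 0)) : Fin (n+2) → Bool) = u
        exact Fin.init_snoc _ _
      · show Fin.init (Fin.snoc f T : Fin (n+1) → Fin 4 → Bool) = f
        exact Fin.init_snoc _ _

lemma card_step (n : ℕ) (σ : Fin 3) :
    Fintype.card {p : (Fin (n+2) → Bool) × (Fin (n+1) → Fin 4 → Bool) // Q' (n+1) σ p} =
      ∑ σ' : Fin 3, Fintype.card {T : Fin 4 → Bool // transOK σ' T σ = true} *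
        Fintype.card {p : (Fin (n+1) → Bool) × (Fin n → Fin 4 → Bool) // Q' n σ' p} := by
  classical
  rw [← Fintype.card_congr (Equiv.sigmaFiberEquiv
    (fun q : {p : (Fin (n+2) → Bool) × (Fin (n+1) → Fin 4 → Bool) // Q' (n+1) σ p} =>
      stAt q.1.1 q.1.2 (Fin.last n).castSucc))]
  rw [Fintype.card_sigma]
  congr 1
  funext σ'
  rw [Fintype.card_congr (fiberEquiv n σ σ'), Fintype.card_prod]

lemma Mcard (σ' σ : Fin 3) :
    Fintype.card {T : Fin 4 → Bool // transOK σ' T σ = true} =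
      ![![1,1,0],![1,3,1],![1,2,1]] σ' σ := by
  fin_cases σ' <;> fin_cases σ <;> decide

lemma card_base (σ : Fin 3) :
    Fintype.card {p : (Fin 1 → Bool) × (Fin 0 → Fin 4 → Bool) // Q' 0 σ p} = ![1,0,1] σ := by
  fin_cases σ <;> decide


def step3 (v : ℕ × ℕ × ℕ) : ℕ × ℕ × ℕ :=
  (v.1 + v.2.1 + v.2.2, v.1 + 3*v.2.1 + 2*v.2.2, v.2.1 + v.2.2)

def vec3 : ℕ → ℕ × ℕ × ℕ
  | 0 => (1, 0, 1)
  | n+1 => step3 (vec3 n)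

lemma Ncard_eq (n : ℕ) :
    (Fintype.card {p : (Fin (n+1) → Bool) × (Fin n → Fin 4 → Bool) // Q' n 0 p},
     Fintype.card {p : (Fin (n+1) → Bool) × (Fin n → Fin 4 → Bool) // Q' n 1 p},
     Fintype.card {p : (Fin (n+1) → Bool) × (Fin n → Fin 4 → Bool) // Q' n 2 p}) = vec3 n := by
  induction n with
  | zero =>
    rw [card_base 0, card_base 1, card_base 2]
    rfl
  | succ n ih =>
    have e0 : Fintype.card {p : (Fin (n+1) → Bool) × (Fin n → Fin 4 → Bool) // Q' n 0 p} =
        (vec3 n).1 := congrArg (fun v => v.1) ih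
    have e1 : Fintype.card {p : (Fin (n+1) → Bool) × (Fin n → Fin 4 → Bool) // Q' n 1 p} =
        (vec3 n).2.1 := congrArg (fun v => v.2.1) ih
    have e2 : Fintype.card {p : (Fin (n+1) → Bool) × (Fin n → Fin 4 → Bool) // Q' n 2 p} =
        (vec3 n).2.2 := congrArg (fun v => v.2.2) ih
    rw [card_step n 0, card_step n 1, card_step n 2]
    simp only [Fin.sum_univ_three, Mcard, e0, e1, e2]
    show _ = step3 (vec3 n)
    unfold step3
    refine Prod.ext ?_ (Prod.ext ?_ ?_) <;> simp [Matrix.vecHead, Matrix.vecTail] <;> ring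

lemma numIDS_eq (n : ℕ) : numIDSParaHex n = (vec3 n).1 + (vec3 n).2.1 := by
  have e0 : Fintype.card {p : (Fin (n+1) → Bool) × (Fin n → Fin 4 → Bool) // Q' n 0 p} =
      (vec3 n).1 := by have := congrArg (fun v : ℕ × ℕ × ℕ => v.1) (Ncard_eq n); simpa using this
  have e1 : Fintype.card {p : (Fin (n+1) → Bool) × (Fin n → Fin 4 → Bool) // Q' n 1 p} =
      (vec3 n).2.1 := by have := congrArg (fun v : ℕ × ℕ × ℕ => v.2.1) (Ncard_eq n); simpa using this
  rw [numIDS_eq_card_QIDS, card_QIDS, e0, e1]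

end IDSProof

/-- `l 0 = 1`, `l 1 = 5`, `l 2 = 19`, `l 3 = 76`, and
`l n = 5·l (n-1) - 4·l (n-2) + l (n-3)` for `n ≥ 3`, where `l n` is the number of
independent dominating sets of `L n` (`L 0` being the one-vertex graph). -/
theorem numIDSParaHex_recurrence :
    numIDSParaHex 0 = 1 ∧ numIDSParaHex 1 = 5 ∧ numIDSParaHex 2 = 19 ∧
      numIDSParaHex 3 = 76 ∧
      ∀ n : ℕ, 3 ≤ n →
        (numIDSParaHex n : ℤ) =
          5 * numIDSParaHex (n - 1) - 4 * numIDSParaHex (n - 2) + numIDSParaHex (n - 3) := by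
  refine ⟨by rw [IDSProof.numIDS_eq]; rfl, by rw [IDSProof.numIDS_eq]; rfl,
    by rw [IDSProof.numIDS_eq]; rfl, by rw [IDSProof.numIDS_eq]; rfl, ?_⟩
  intro n hn
  obtain ⟨m, rfl⟩ : ∃ m, n = m + 3 := ⟨n - 3, by omega⟩
  have h1 : m + 3 - 1 = m + 2 := by omega
  have h2 : m + 3 - 2 = m + 1 := by omega
  have h3 : m + 3 - 3 = m := by omega
  rw [h1, h2, h3, IDSProof.numIDS_eq, IDSProof.numIDS_eq, IDSProof.numIDS_eq, IDSProof.numIDS_eq]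
  rcases h : IDSProof.vec3 m with ⟨a, b, c⟩
  have hv1 : IDSProof.vec3 (m+1) = IDSProof.step3 (a, b, c) := by rw [IDSProof.vec3, h]
  have hv2 : IDSProof.vec3 (m+2) = IDSProof.step3 (IDSProof.step3 (a, b, c)) := by
    rw [show m+2 = (m+1)+1 from rfl, IDSProof.vec3, hv1]
  have hv3 : IDSProof.vec3 (m+3) = IDSProof.step3 (IDSProof.step3 (IDSProof.step3 (a, b, c))) := by
    rw [show m+3 = (m+2)+1 from rfl, IDSProof.vec3, hv2]
  rw [hv1, hv2, hv3]
  unfold IDSProof.step3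
  push_cast
  ring
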